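/- For the potential U with parameters (a,b,c) = (−1,−0.3,−1) and ε₂ = 1, U has exactly four critical points; with ε₂ = −1 it has exactly two critical points. -/

import Mathlib

open Set Polynomial

private lemma crit_set_eq (ε : ℝ) :
    {p : ℝ × ℝ | (-1 : ℝ) + (-1) * p.1 + 3 * ε * p.1 ^ 2 + p.2 ^ 2 = 0 ∧
      (-3 / 10 : ℝ) + 2 * p.1 * p.2 = 0}
    = (fun v : ℝ => (v, 3 / (20 * v))) ''
      {v : ℝ | 3 * ε * v ^ 4 - v ^ 3 - v ^ 2 + 9 / 400 = 0} := by
  ext ⟨x, y⟩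
  simp only [Set.mem_setOf_eq, Set.mem_image, Prod.mk.injEq]
  constructor
  · rintro ⟨h1, h2⟩
    have hx : x ≠ 0 := by rintro rfl; norm_num at h2
    refine ⟨x, by linear_combination x^2*h1 - (x*y+3/20)/2*h2, rfl, ?_⟩
    field_simp
    linarith
  · rintro ⟨v, hv, rfl, rfl⟩
    have hv0 : v ≠ 0 := by rintro rfl; norm_num at hv
    constructor
    · field_simp
      linear_combination 400 * hv
    · field_simp
      ring

private noncomputable def f1 : ℝ → ℝ := fun v => 3 * 1 * v ^ 4 - v ^ 3 - v ^ 2 + 9 / 400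

private lemma card1 : ({v : ℝ | 3 * 1 * v ^ 4 - v ^ 3 - v ^ 2 + 9 / 400 = 0}).ncard = 4 := by
  have hcont : Continuous f1 := by unfold f1; fun_prop
  have hR : {v : ℝ | 3 * 1 * v ^ 4 - v ^ 3 - v ^ 2 + 9 / 400 = 0} = {v : ℝ | f1 v = 0} := rfl
  rw [hR]
  -- four roots by IVT
  obtain ⟨r1, hr1m, hr1⟩ := intermediate_value_Icc' (by norm_num : (-1:ℝ) ≤ -3/10)
    hcont.continuousOn (show (0:ℝ) ∈ Icc (f1 (-3/10)) (f1 (-1)) from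
      ⟨by norm_num [f1], by norm_num [f1]⟩)
  obtain ⟨r2, hr2m, hr2⟩ := intermediate_value_Icc (by norm_num : (-3/10:ℝ) ≤ 0)
    hcont.continuousOn (show (0:ℝ) ∈ Icc (f1 (-3/10)) (f1 0) from
      ⟨by norm_num [f1], by norm_num [f1]⟩)
  obtain ⟨r3, hr3m, hr3⟩ := intermediate_value_Icc' (by norm_num : (0:ℝ) ≤ 1/5)
    hcont.continuousOn (show (0:ℝ) ∈ Icc (f1 (1/5)) (f1 0) from
      ⟨by norm_num [f1], by norm_num [f1]⟩)
  obtain ⟨r4, hr4m, hr4⟩ := intermediate_value_Icc (by norm_num : (1/5:ℝ) ≤ 1)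
    hcont.continuousOn (show (0:ℝ) ∈ Icc (f1 (1/5)) (f1 1) from
      ⟨by norm_num [f1], by norm_num [f1]⟩)
  obtain ⟨hr1a, hr1b⟩ := hr1m
  obtain ⟨hr2a, hr2b⟩ := hr2m
  obtain ⟨hr3a, hr3b⟩ := hr3m
  obtain ⟨hr4a, hr4b⟩ := hr4m
  -- pairwise distinct
  have hne0 : f1 (-3/10) ≠ 0 := by norm_num [f1]
  have hne1 : f1 0 ≠ 0 := by norm_num [f1]
  have hne2 : f1 (1/5) ≠ 0 := by norm_num [f1]
  have h12 : r1 ≠ r2 := by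
    rintro rfl
    have h : r1 = -3/10 := le_antisymm hr1b hr2a
    rw [h] at hr1; exact hne0 hr1
  have h23 : r2 ≠ r3 := by
    rintro rfl
    have h : r2 = 0 := le_antisymm hr2b hr3a
    rw [h] at hr2; exact hne1 hr2
  have h34 : r3 ≠ r4 := by
    rintro rfl
    have h : r3 = 1/5 := le_antisymm hr3b hr4a
    rw [h] at hr3; exact hne2 hr3
  have h13 : r1 ≠ r3 := by
    rintro rfl
    have h : r1 = 0 := le_antisymm (by linarith) hr3a
    rw [h] at hr1; exact hne1 hr1
  have h14 : r1 ≠ r4 := by rintro rfl; linarith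
  have h24 : r2 ≠ r4 := by
    rintro rfl
    have h : r2 = 0 := le_antisymm hr2b (by linarith)
    rw [h] at hr2; exact hne1 hr2
  -- at most four roots, by the degree bound
  set P : Polynomial ℝ := Polynomial.C 3 * Polynomial.X ^ 4 - Polynomial.X ^ 3
      - Polynomial.X ^ 2 + Polynomial.C (9/400) with hP
  have hdeg : P.natDegree = 4 := by rw [hP]; compute_degree <;> norm_num
  have hP0 : P ≠ 0 := by intro h; rw [h] at hdeg; simp at hdeg
  have heval : ∀ v : ℝ, P.eval v = f1 v := by intro v; simp [hP, f1]
  have hsub : {v : ℝ | f1 v = 0} ⊆ (P.roots.toFinset : Set ℝ) := by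
    intro v hv
    simp only [Finset.coe_sort_coe, Multiset.mem_toFinset, Finset.mem_coe,
      mem_roots hP0, IsRoot.def, heval]
    exact hv
  have hfin : ({v : ℝ | f1 v = 0}).Finite := (P.roots.toFinset.finite_toSet).subset hsub
  have hle : ({v : ℝ | f1 v = 0}).ncard ≤ 4 := by
    calc ({v : ℝ | f1 v = 0}).ncard ≤ (P.roots.toFinset : Set ℝ).ncard :=
          Set.ncard_le_ncard hsub (P.roots.toFinset.finite_toSet)
      _ = P.roots.toFinset.card := Set.ncard_coe_finset _
      _ ≤ Multiset.card P.roots := Multiset.toFinset_card_le _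
      _ ≤ P.natDegree := P.card_roots'
      _ = 4 := hdeg
  have hsub2 : {r1, r2, r3, r4} ⊆ {v : ℝ | f1 v = 0} := by
    rintro x (rfl | rfl | rfl | rfl) <;> assumption
  have hcard4 : ({r1, r2, r3, r4} : Set ℝ).ncard = 4 := by
    rw [Set.ncard_insert_of_notMem (by simp [h12, h13, h14]) (Set.toFinite _),
      Set.ncard_insert_of_notMem (by simp [h23, h24]) (Set.toFinite _),
      Set.ncard_pair h34]
  have := Set.eq_of_subset_of_ncard_le hsub2 (hcard4 ▸ hle) hfin
  rw [← this, hcard4]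

private noncomputable def g2 : ℝ → ℝ := fun v => 3 * v ^ 4 + v ^ 3 + v ^ 2

private lemma g2_cont : Continuous g2 := by unfold g2; fun_prop

private lemma g2_deriv : ∀ x : ℝ, HasDerivAt g2 (12 * x ^ 3 + 3 * x ^ 2 + 2 * x) x := by
  intro x
  have h := (((hasDerivAt_pow 4 x).const_mul 3).add (hasDerivAt_pow 3 x)).add
    (hasDerivAt_pow 2 x)
  unfold g2
  refine h.congr_deriv ?_
  push_cast
  ring

private lemma g2_anti : StrictAntiOn g2 (Set.Iic 0) := by
  apply strictAntiOn_of_deriv_neg (convex_Iic 0) g2_cont.continuousOn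
  intro x hx
  rw [interior_Iic] at hx
  rw [(g2_deriv x).deriv]
  have hx' : x < 0 := hx
  have h2 : (0:ℝ) < 12 * x ^ 2 + 3 * x + 2 := by nlinarith [sq_nonneg (8 * x + 1)]
  nlinarith [mul_neg_of_neg_of_pos hx' h2]

private lemma g2_mono : StrictMonoOn g2 (Set.Ici 0) := by
  apply strictMonoOn_of_deriv_pos (convex_Ici 0) g2_cont.continuousOn
  intro x hx
  rw [interior_Ici] at hx
  rw [(g2_deriv x).deriv]
  have hx' : (0:ℝ) < x := hx
  nlinarith [pow_pos hx' 3, pow_pos hx' 2]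

private lemma card2 : ({v : ℝ | 3 * (-1) * v ^ 4 - v ^ 3 - v ^ 2 + 9 / 400 = 0}).ncard = 2 := by
  have hRg : {v : ℝ | 3 * (-1) * v ^ 4 - v ^ 3 - v ^ 2 + 9 / 400 = 0}
      = {v : ℝ | g2 v = 9 / 400} := by
    ext v; simp only [Set.mem_setOf_eq, g2]; constructor <;> intro h <;> linarith
  rw [hRg]
  have hcont : Continuous (fun v : ℝ => g2 v - 9 / 400) := g2_cont.sub continuous_const
  obtain ⟨r5, hr5m, hr5⟩ := intermediate_value_Icc' (by norm_num : (-1:ℝ) ≤ 0)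
    hcont.continuousOn (show (0:ℝ) ∈ Icc (g2 0 - 9/400) (g2 (-1) - 9/400) from
      ⟨by norm_num [g2], by norm_num [g2]⟩)
  obtain ⟨r6, hr6m, hr6⟩ := intermediate_value_Icc (by norm_num : (0:ℝ) ≤ 1)
    hcont.continuousOn (show (0:ℝ) ∈ Icc (g2 0 - 9/400) (g2 1 - 9/400) from
      ⟨by norm_num [g2], by norm_num [g2]⟩)
  obtain ⟨hr5a, hr5b⟩ := hr5m
  obtain ⟨hr6a, hr6b⟩ := hr6m
  have hg5 : g2 r5 = 9 / 400 := by linarith [hr5]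
  have hg6 : g2 r6 = 9 / 400 := by linarith [hr6]
  have hne : r5 ≠ r6 := by
    rintro rfl
    have h : r5 = 0 := le_antisymm hr5b hr6a
    rw [h] at hg5
    norm_num [g2] at hg5
  have hset : {v : ℝ | g2 v = 9 / 400} = {r5, r6} := by
    ext x
    simp only [Set.mem_setOf_eq, Set.mem_insert_iff, Set.mem_singleton_iff]
    constructor
    · intro hx
      rcases le_or_gt x 0 with h0 | h0
      · exact Or.inl (g2_anti.injOn h0 hr5b (by rw [hx, hg5]))
      · exact Or.inr (g2_mono.injOn (le_of_lt h0) hr6a (by rw [hx, hg6]))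
    · rintro (rfl | rfl) <;> assumption
  rw [hset, Set.ncard_pair hne]

private lemma phi_inj : Function.Injective (fun v : ℝ => (v, 3 / (20 * v))) :=
  fun _ _ h => congrArg Prod.fst h

/-- For U(ξ) = aξ₁ + bξ₂ + (c/2)ξ₁² + ε₂ξ₁³ + ξ₁ξ₂² with
(a,b,c) = (−1, −3/10, −1): with ε₂ = 1 there are exactly four critical points,
with ε₂ = −1 exactly two. (∇U = (a + cξ₁ + 3ε₂ξ₁² + ξ₂², b + 2ξ₁ξ₂).) -/
theorem stmt_19 :
    Set.ncard {p : ℝ × ℝ |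
      (-1 : ℝ) + (-1) * p.1 + 3 * 1 * p.1 ^ 2 + p.2 ^ 2 = 0 ∧
      (-3 / 10 : ℝ) + 2 * p.1 * p.2 = 0} = 4 ∧
    Set.ncard {p : ℝ × ℝ |
      (-1 : ℝ) + (-1) * p.1 + 3 * (-1) * p.1 ^ 2 + p.2 ^ 2 = 0 ∧
      (-3 / 10 : ℝ) + 2 * p.1 * p.2 = 0} = 2 := by
  constructor
  · rw [crit_set_eq 1, Set.ncard_image_of_injective _ phi_inj]
    exact card1
  · rw [crit_set_eq (-1), Set.ncard_image_of_injective _ phi_inj]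
    exact card2
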